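/- arXiv:1502.05197 — 6 statements merged into one kernel-verified Lean document; each statement's English description precedes it below -/
import Mathlib

section
/- (Theorem 1, part 1: invariance of the box.) Assume in addition that P_i ≤ 1 for every index i (so that P_i·a₃ ≤ 1 for every a in the unit sphere). Then for every W ∈ ℝ^G with 0 ≤ W_j ≤ 1/μ for all j, the vector T̂(W) satisfies 0 ≤ T̂_i(W) ≤ 1/μ for every i. -/
/-- The expression minimized over the unit sphere in the semi-Lagrangian operator:
`exp(−μh) Σ_j λ(i,a,j) W_j − τ P_i a₃ (1 − μ W_i)` with `τ = (1 − exp(−μh))/μ`. -/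
noncomputable def SLexpr (G : ℕ) (μ h : ℝ) (P : Fin G → ℝ)
    (lam : Fin G → EuclideanSpace ℝ (Fin 3) → Fin G → ℝ)
    (W : Fin G → ℝ) (i : Fin G) (a : EuclideanSpace ℝ (Fin 3)) : ℝ :=
  Real.exp (-(μ * h)) * (∑ j, lam i a j * W j)
    - ((1 - Real.exp (-(μ * h))) / μ) * (P i * a 2 * (1 - μ * W i))

/-- The semi-Lagrangian operator `T̂_i(W) = min_{a ∈ S²} SLexpr + τ`
(the minimum is the infimum over the compact sphere, where it is attained). -/
noncomputable def SLop (G : ℕ) (μ h : ℝ) (P : Fin G → ℝ)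
    (lam : Fin G → EuclideanSpace ℝ (Fin 3) → Fin G → ℝ)
    (W : Fin G → ℝ) (i : Fin G) : ℝ :=
  sInf (SLexpr G μ h P lam W i '' Metric.sphere (0 : EuclideanSpace ℝ (Fin 3)) 1)
    + (1 - Real.exp (-(μ * h))) / μ

/-- Theorem 1, part 1: invariance of the box `[0, 1/μ]^G` under `T̂`
when `P_i ≤ 1` for every `i`. -/
theorem sl_box_invariance (G : ℕ) (hG : 1 ≤ G) (μ h : ℝ) (hμ : 0 < μ) (hh : 0 < h)
    (P : Fin G → ℝ) (hP0 : ∀ i, 0 ≤ P i) (hP1 : ∀ i, P i ≤ 1)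
    (lam : Fin G → EuclideanSpace ℝ (Fin 3) → Fin G → ℝ)
    (hlam0 : ∀ i, ∀ a ∈ Metric.sphere (0 : EuclideanSpace ℝ (Fin 3)) 1, ∀ j, 0 ≤ lam i a j)
    (hlam1 : ∀ i, ∀ a ∈ Metric.sphere (0 : EuclideanSpace ℝ (Fin 3)) 1, ∑ j, lam i a j = 1)
    (hlamc : ∀ i j, ContinuousOn (fun a => lam i a j)
      (Metric.sphere (0 : EuclideanSpace ℝ (Fin 3)) 1))
    (W : Fin G → ℝ) (hW : ∀ j, 0 ≤ W j ∧ W j ≤ 1 / μ) :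
    ∀ i, 0 ≤ SLop G μ h P lam W i ∧ SLop G μ h P lam W i ≤ 1 / μ := by
  intro i
  set e := Real.exp (-(μ * h)) with he
  have he0 : 0 < e := Real.exp_pos _
  have he1 : e < 1 := by
    rw [he]
    have : -(μ * h) < 0 := by nlinarith
    calc Real.exp (-(μ * h)) < Real.exp 0 := Real.exp_lt_exp.mpr this
      _ = 1 := Real.exp_zero
  set τ := (1 - e) / μ with hτ
  have hτ0 : 0 ≤ τ := div_nonneg (by linarith) hμ.le
  -- coordinate bound
  have hcoord : ∀ a ∈ Metric.sphere (0 : EuclideanSpace ℝ (Fin 3)) 1, |a 2| ≤ 1 := by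
    intro a ha
    have hna : ‖a‖ = 1 := by rwa [mem_sphere_zero_iff_norm] at ha
    have h2 : |a 2| ^ 2 ≤ ∑ j, ‖a j‖ ^ 2 := by
      have := Finset.single_le_sum (f := fun j => ‖a j‖ ^ 2)
        (fun j _ => by positivity) (Finset.mem_univ (2 : Fin 3))
      simpa [sq_abs] using this
    have := EuclideanSpace.norm_eq a
    rw [hna] at this
    have hsum : ∑ j, ‖a j‖ ^ 2 = 1 := by
      have hnn : 0 ≤ ∑ j, ‖a j‖ ^ 2 := Finset.sum_nonneg fun j _ => by positivity
      nlinarith [Real.sq_sqrt hnn]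
    nlinarith [abs_nonneg (a 2)]
  -- bounds on SLexpr over the sphere
  have hS : ∀ a ∈ Metric.sphere (0 : EuclideanSpace ℝ (Fin 3)) 1,
      0 ≤ ∑ j, lam i a j * W j ∧ (∑ j, lam i a j * W j) ≤ 1 / μ := by
    intro a ha
    constructor
    · exact Finset.sum_nonneg fun j _ => mul_nonneg (hlam0 i a ha j) (hW j).1
    · calc (∑ j, lam i a j * W j) ≤ ∑ j, lam i a j * (1 / μ) :=
            Finset.sum_le_sum fun j _ =>
              mul_le_mul_of_nonneg_left (hW j).2 (hlam0 i a ha j)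
        _ = (∑ j, lam i a j) * (1 / μ) := by rw [Finset.sum_mul]
        _ = 1 / μ := by rw [hlam1 i a ha, one_mul]
  have hterm : ∀ a ∈ Metric.sphere (0 : EuclideanSpace ℝ (Fin 3)) 1,
      |P i * a 2 * (1 - μ * W i)| ≤ 1 := by
    intro a ha
    have h1 : 0 ≤ 1 - μ * W i := by
      have := (hW i).2
      have : μ * W i ≤ 1 := by
        calc μ * W i ≤ μ * (1 / μ) := mul_le_mul_of_nonneg_left (hW i).2 hμ.le
          _ = 1 := by field_simp
      linarith
    have h2 : 1 - μ * W i ≤ 1 := by nlinarith [(hW i).1]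
    have := hcoord a ha
    rw [abs_mul, abs_mul]
    have hPa : |P i| ≤ 1 := by rw [abs_of_nonneg (hP0 i)]; exact hP1 i
    have h3 : |1 - μ * W i| ≤ 1 := by rw [abs_of_nonneg h1]; exact h2
    calc |P i| * |a 2| * |1 - μ * W i| ≤ 1 * 1 * 1 := by
          apply mul_le_mul _ h3 (abs_nonneg _) (by norm_num)
          exact mul_le_mul hPa this (abs_nonneg _) (by linarith [abs_nonneg (P i)])
      _ = 1 := by norm_num
  have hlow : ∀ x ∈ SLexpr G μ h P lam W i '' Metric.sphere (0 : EuclideanSpace ℝ (Fin 3)) 1,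
      -τ ≤ x := by
    rintro x ⟨a, ha, rfl⟩
    have h1 := (hS a ha).1
    have h2 := hterm a ha
    have h3 : P i * a 2 * (1 - μ * W i) ≤ 1 := (abs_le.mp h2).2
    have : τ * (P i * a 2 * (1 - μ * W i)) ≤ τ * 1 :=
      mul_le_mul_of_nonneg_left h3 hτ0
    unfold SLexpr
    rw [← he, ← hτ]
    nlinarith
  have hbdd : BddBelow (SLexpr G μ h P lam W i '' Metric.sphere (0 : EuclideanSpace ℝ (Fin 3)) 1) :=
    ⟨-τ, hlow⟩
  -- a witness point on the sphere: e₃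
  set a₀ : EuclideanSpace ℝ (Fin 3) := EuclideanSpace.single 2 1 with ha₀
  have ha₀s : a₀ ∈ Metric.sphere (0 : EuclideanSpace ℝ (Fin 3)) 1 := by
    rw [mem_sphere_zero_iff_norm, ha₀, EuclideanSpace.norm_single]
    norm_num
  have hne : (SLexpr G μ h P lam W i '' Metric.sphere (0 : EuclideanSpace ℝ (Fin 3)) 1).Nonempty :=
    ⟨_, Set.mem_image_of_mem _ ha₀s⟩
  constructor
  · have : -τ ≤ sInf (SLexpr G μ h P lam W i '' Metric.sphere (0 : EuclideanSpace ℝ (Fin 3)) 1) :=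
      le_csInf hne hlow
    unfold SLop
    rw [← he, ← hτ]
    linarith
  · have hub : SLexpr G μ h P lam W i a₀ ≤ e / μ := by
      have h1 := (hS a₀ ha₀s).2
      have ha2 : a₀ 2 = 1 := by
        rw [ha₀]
        simp [EuclideanSpace.single_apply]
      have h1' : 0 ≤ 1 - μ * W i := by
        have : μ * W i ≤ 1 := by
          calc μ * W i ≤ μ * (1 / μ) := mul_le_mul_of_nonneg_left (hW i).2 hμ.le
            _ = 1 := by field_simp
        linarith
      have hterm0 : 0 ≤ τ * (P i * a₀ 2 * (1 - μ * W i)) := by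
        apply mul_nonneg hτ0
        rw [ha2, mul_one]
        exact mul_nonneg (hP0 i) h1'
      unfold SLexpr
      rw [← he, ← hτ]
      have : e * (∑ j, lam i a₀ j * W j) ≤ e * (1 / μ) :=
        mul_le_mul_of_nonneg_left h1 he0.le
      have heq : e * (1 / μ) = e / μ := by ring
      linarith
    have hsinf : sInf (SLexpr G μ h P lam W i '' Metric.sphere (0 : EuclideanSpace ℝ (Fin 3)) 1)
        ≤ e / μ :=
      le_trans (csInf_le hbdd (Set.mem_image_of_mem _ ha₀s)) hub
    unfold SLop
    rw [← he, ← hτ]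
    have : e / μ + τ = 1 / μ := by rw [hτ]; field_simp; ring
    linarith
end

section
/- (Theorem 1, part 2: monotonicity.) Let W, W̄ ∈ ℝ^G with W_j ≤ W̄_j for all j. Assume that for every index i the minimum defining T̂_i(W̄) is attained at some ā ∈ S² with ā₃ ≥ 0. Then T̂_i(W) ≤ T̂_i(W̄) for every i. -/
/-- Theorem 1, part 2: monotonicity of `T̂`.  If `W ≤ W̄` componentwise and, for each `i`,
the minimum defining `T̂_i(W̄)` is attained at some `ā ∈ S²` with `ā₃ ≥ 0`, then
`T̂_i(W) ≤ T̂_i(W̄)` for every `i`. -/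
theorem sl_monotone (G : ℕ) (hG : 1 ≤ G) (μ h : ℝ) (hμ : 0 < μ) (hh : 0 < h)
    (P : Fin G → ℝ) (hP0 : ∀ i, 0 ≤ P i)
    (lam : Fin G → EuclideanSpace ℝ (Fin 3) → Fin G → ℝ)
    (hlam0 : ∀ i, ∀ a ∈ Metric.sphere (0 : EuclideanSpace ℝ (Fin 3)) 1, ∀ j, 0 ≤ lam i a j)
    (hlam1 : ∀ i, ∀ a ∈ Metric.sphere (0 : EuclideanSpace ℝ (Fin 3)) 1, ∑ j, lam i a j = 1)
    (hlamc : ∀ i j, ContinuousOn (fun a => lam i a j)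
      (Metric.sphere (0 : EuclideanSpace ℝ (Fin 3)) 1))
    (W Wbar : Fin G → ℝ) (hle : ∀ j, W j ≤ Wbar j)
    (hattain : ∀ i, ∃ abar ∈ Metric.sphere (0 : EuclideanSpace ℝ (Fin 3)) 1,
      0 ≤ abar 2 ∧ SLexpr G μ h P lam Wbar i abar =
        sInf (SLexpr G μ h P lam Wbar i '' Metric.sphere (0 : EuclideanSpace ℝ (Fin 3)) 1)) :
    ∀ i, SLop G μ h P lam W i ≤ SLop G μ h P lam Wbar i := by
  intro i
  obtain ⟨abar, hsph, ha3, heq⟩ := hattain i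
  unfold SLop
  gcongr ?_ + _
  rw [← heq]
  -- sInf (image of W) ≤ SLexpr W i abar ≤ SLexpr Wbar i abar
  have hexp : (0:ℝ) < Real.exp (-(μ * h)) := Real.exp_pos _
  have hexp1 : Real.exp (-(μ * h)) ≤ 1 := by
    apply Real.exp_le_one_iff.mpr
    nlinarith
  have hτ : (0:ℝ) ≤ (1 - Real.exp (-(μ * h))) / μ :=
    div_nonneg (by linarith) hμ.le
  have hmono : SLexpr G μ h P lam W i abar ≤ SLexpr G μ h P lam Wbar i abar := by
    unfold SLexpr
    have h1 : ∑ j, lam i abar j * W j ≤ ∑ j, lam i abar j * Wbar j := by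
      apply Finset.sum_le_sum
      intro j _
      exact mul_le_mul_of_nonneg_left (hle j) (hlam0 i abar hsph j)
    have h2 : ((1 - Real.exp (-(μ * h))) / μ) * (P i * abar 2 * (1 - μ * Wbar i))
        ≤ ((1 - Real.exp (-(μ * h))) / μ) * (P i * abar 2 * (1 - μ * W i)) := by
      apply mul_le_mul_of_nonneg_left _ hτ
      apply mul_le_mul_of_nonneg_left _ (mul_nonneg (hP0 i) ha3)
      nlinarith [hle i]
    nlinarith
  refine le_trans (csInf_le ?_ ⟨abar, hsph, rfl⟩) hmono
  -- bounded below: image of compact set under continuous function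
  have hcont : ContinuousOn (SLexpr G μ h P lam W i)
      (Metric.sphere (0 : EuclideanSpace ℝ (Fin 3)) 1) := by
    unfold SLexpr
    apply ContinuousOn.sub
    · exact continuousOn_const.mul (continuousOn_finset_sum _ fun j _ =>
        (hlamc i j).mul continuousOn_const)
    · exact continuousOn_const.mul
        ((continuousOn_const.mul ((EuclideanSpace.proj (2 : Fin 3)).continuous.continuousOn)).mul
          continuousOn_const)
  exact ((isCompact_sphere _ _).image_of_continuousOn hcont).bddBelow
end

section
/- (Theorem 1, part 3: contraction estimate.) Let p ≥ 0 be such that P_i ≤ p for every index i. Then for all W, W̄ ∈ ℝ^G one has max_i |T̂_i(W) − T̂_i(W̄)| ≤ (exp(−μh) + (1 − exp(−μh))·p) · max_j |W_j − W̄_j|. In particular, if p < 1 then T̂ is a contraction mapping on ℝ^G with respect to the supremum norm. -/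
lemma abs_coord (a : EuclideanSpace ℝ (Fin 3)) (i : Fin 3) : |a i| ≤ ‖a‖ := by
  rw [EuclideanSpace.norm_eq]
  calc |a i| = Real.sqrt (‖a i‖^2) := by
        rw [Real.norm_eq_abs, Real.sqrt_sq_eq_abs, abs_abs]
    _ ≤ _ := Real.sqrt_le_sqrt
        (Finset.single_le_sum (fun j _ => sq_nonneg ‖a j‖) (Finset.mem_univ i))

lemma sphere_ne : (Metric.sphere (0 : EuclideanSpace ℝ (Fin 3)) 1).Nonempty :=
  ⟨EuclideanSpace.single 2 1, by simp [mem_sphere_iff_norm, EuclideanSpace.norm_single]⟩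

lemma slexpr_contOn (G : ℕ) (μ h : ℝ) (P : Fin G → ℝ)
    (lam : Fin G → EuclideanSpace ℝ (Fin 3) → Fin G → ℝ)
    (hlamc : ∀ i j, ContinuousOn (fun a => lam i a j)
      (Metric.sphere (0 : EuclideanSpace ℝ (Fin 3)) 1))
    (W : Fin G → ℝ) (i : Fin G) :
    ContinuousOn (SLexpr G μ h P lam W i)
      (Metric.sphere (0 : EuclideanSpace ℝ (Fin 3)) 1) := by
  unfold SLexpr
  apply ContinuousOn.sub
  · exact continuousOn_const.mul <| continuousOn_finset_sum _ fun j _ =>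
      (hlamc i j).mul continuousOn_const
  · exact continuousOn_const.mul <|
      ((continuousOn_const.mul ((EuclideanSpace.proj (2 : Fin 3) :
        EuclideanSpace ℝ (Fin 3) →L[ℝ] ℝ).continuous.continuousOn)).mul continuousOn_const)

lemma sl_bdd (G : ℕ) (μ h : ℝ) (P : Fin G → ℝ)
    (lam : Fin G → EuclideanSpace ℝ (Fin 3) → Fin G → ℝ)
    (hlamc : ∀ i j, ContinuousOn (fun a => lam i a j)
      (Metric.sphere (0 : EuclideanSpace ℝ (Fin 3)) 1))
    (W : Fin G → ℝ) (i : Fin G) :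
    BddBelow (SLexpr G μ h P lam W i '' Metric.sphere (0 : EuclideanSpace ℝ (Fin 3)) 1) :=
  ((isCompact_sphere 0 1).image_of_continuousOn
    (slexpr_contOn G μ h P lam hlamc W i)).bddBelow

lemma sl_diff_le (G : ℕ) (hG : 1 ≤ G) (μ h : ℝ) (hμ : 0 < μ) (hh : 0 < h)
    (P : Fin G → ℝ) (hP0 : ∀ i, 0 ≤ P i)
    (lam : Fin G → EuclideanSpace ℝ (Fin 3) → Fin G → ℝ)
    (hlam0 : ∀ i, ∀ a ∈ Metric.sphere (0 : EuclideanSpace ℝ (Fin 3)) 1, ∀ j, 0 ≤ lam i a j)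
    (hlam1 : ∀ i, ∀ a ∈ Metric.sphere (0 : EuclideanSpace ℝ (Fin 3)) 1, ∑ j, lam i a j = 1)
    (hlamc : ∀ i j, ContinuousOn (fun a => lam i a j)
      (Metric.sphere (0 : EuclideanSpace ℝ (Fin 3)) 1))
    (p : ℝ) (hp : 0 ≤ p) (hPp : ∀ i, P i ≤ p)
    (W Wbar : Fin G → ℝ) (i : Fin G) :
    SLop G μ h P lam W i - SLop G μ h P lam Wbar i ≤
      (Real.exp (-(μ * h)) + (1 - Real.exp (-(μ * h))) * p) * ⨆ j, |W j - Wbar j| := by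
  haveI : Nonempty (Fin G) := Fin.pos_iff_nonempty.mp hG
  set E := Real.exp (-(μ * h)) with hE
  have hE0 : 0 < E := Real.exp_pos _
  have hE1 : E < 1 := by
    calc E < Real.exp 0 := Real.exp_lt_exp.mpr (by nlinarith)
      _ = 1 := Real.exp_zero
  set M := ⨆ j, |W j - Wbar j| with hM
  have hBdd : BddAbove (Set.range fun j => |W j - Wbar j|) :=
    Set.Finite.bddAbove (Set.finite_range _)
  have hMj : ∀ j, |W j - Wbar j| ≤ M := fun j => le_ciSup hBdd j
  have hM0 : 0 ≤ M := le_trans (abs_nonneg _) (hMj (Classical.arbitrary _))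
  set c := (1 - E) / μ with hc
  have hc0 : 0 ≤ c := div_nonneg (by linarith) hμ.le
  -- pointwise bound
  have hpt : ∀ a ∈ Metric.sphere (0 : EuclideanSpace ℝ (Fin 3)) 1,
      SLexpr G μ h P lam W i a ≤ SLexpr G μ h P lam Wbar i a + (E + (1 - E) * p) * M := by
    intro a ha
    have ha3 : |a 2| ≤ 1 := by
      have h1 := abs_coord a 2
      rw [mem_sphere_iff_norm, sub_zero] at ha
      rw [ha] at h1; exact h1
    have hsum : |∑ j, lam i a j * (W j - Wbar j)| ≤ M := by
      calc |∑ j, lam i a j * (W j - Wbar j)| ≤ ∑ j, |lam i a j * (W j - Wbar j)| :=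
            Finset.abs_sum_le_sum_abs _ _
        _ ≤ ∑ j, lam i a j * M := Finset.sum_le_sum fun j _ => by
            rw [abs_mul, abs_of_nonneg (hlam0 i a ha j)]
            exact mul_le_mul_of_nonneg_left (hMj j) (hlam0 i a ha j)
        _ = M := by rw [← Finset.sum_mul, hlam1 i a ha, one_mul]
    have ht2 : |c * (P i * a 2 * (μ * (W i - Wbar i)))| ≤ (1 - E) * p * M := by
      calc |c * (P i * a 2 * (μ * (W i - Wbar i)))|
          = c * (P i * |a 2| * (μ * |W i - Wbar i|)) := by
            rw [abs_mul, abs_mul, abs_mul, abs_mul, abs_of_nonneg hc0, abs_of_nonneg (hP0 i),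
              abs_of_nonneg hμ.le]
        _ ≤ c * (p * 1 * (μ * M)) := by gcongr <;> first | exact hPp i | exact hMj i
        _ = (1 - E) * p * M := by
            rw [hc]; field_simp
    have key : SLexpr G μ h P lam W i a - SLexpr G μ h P lam Wbar i a
        = E * (∑ j, lam i a j * (W j - Wbar j))
          + c * (P i * a 2 * (μ * (W i - Wbar i))) := by
      have hs : ∑ j, lam i a j * (W j - Wbar j)
          = (∑ j, lam i a j * W j) - ∑ j, lam i a j * Wbar j := by
        rw [← Finset.sum_sub_distrib]
        exact Finset.sum_congr rfl fun j _ => by ring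
      simp only [SLexpr, hs, ← hE, ← hc]
      ring
    have h1 : E * (∑ j, lam i a j * (W j - Wbar j)) ≤ E * M :=
      mul_le_mul_of_nonneg_left ((abs_le.mp hsum).2) hE0.le
    have h2 := (abs_le.mp ht2).2
    linarith
  -- inf comparison
  have hne : (SLexpr G μ h P lam W i '' Metric.sphere (0 : EuclideanSpace ℝ (Fin 3)) 1).Nonempty :=
    sphere_ne.image _
  have hcomp : sInf (SLexpr G μ h P lam W i '' Metric.sphere (0 : EuclideanSpace ℝ (Fin 3)) 1)
      - (E + (1 - E) * p) * M
      ≤ sInf (SLexpr G μ h P lam Wbar i '' Metric.sphere (0 : EuclideanSpace ℝ (Fin 3)) 1) := by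
    apply le_csInf (sphere_ne.image _)
    rintro b ⟨a, ha, rfl⟩
    have h1 : sInf (SLexpr G μ h P lam W i '' Metric.sphere (0 : EuclideanSpace ℝ (Fin 3)) 1)
        ≤ SLexpr G μ h P lam W i a :=
      csInf_le (sl_bdd G μ h P lam hlamc W i) ⟨a, ha, rfl⟩
    have h2 := hpt a ha
    linarith
  simp only [SLop, ← hE]
  linarith

/-- Theorem 1, part 3: contraction estimate.  If `P_i ≤ p` for every `i`, then
`max_i |T̂_i(W) − T̂_i(W̄)| ≤ (exp(−μh) + (1 − exp(−μh))·p) · max_j |W_j − W̄_j|`;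
in particular, if `p < 1` the Lipschitz constant `exp(−μh) + (1 − exp(−μh))·p` is `< 1`,
so `T̂` is a contraction with respect to the supremum norm. -/
theorem sl_contraction (G : ℕ) (hG : 1 ≤ G) (μ h : ℝ) (hμ : 0 < μ) (hh : 0 < h)
    (P : Fin G → ℝ) (hP0 : ∀ i, 0 ≤ P i)
    (lam : Fin G → EuclideanSpace ℝ (Fin 3) → Fin G → ℝ)
    (hlam0 : ∀ i, ∀ a ∈ Metric.sphere (0 : EuclideanSpace ℝ (Fin 3)) 1, ∀ j, 0 ≤ lam i a j)
    (hlam1 : ∀ i, ∀ a ∈ Metric.sphere (0 : EuclideanSpace ℝ (Fin 3)) 1, ∑ j, lam i a j = 1)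
    (hlamc : ∀ i j, ContinuousOn (fun a => lam i a j)
      (Metric.sphere (0 : EuclideanSpace ℝ (Fin 3)) 1))
    (p : ℝ) (hp : 0 ≤ p) (hPp : ∀ i, P i ≤ p) :
    (∀ W Wbar : Fin G → ℝ,
      (⨆ i, |SLop G μ h P lam W i - SLop G μ h P lam Wbar i|) ≤
        (Real.exp (-(μ * h)) + (1 - Real.exp (-(μ * h))) * p) * ⨆ j, |W j - Wbar j|) ∧
    (p < 1 → Real.exp (-(μ * h)) + (1 - Real.exp (-(μ * h))) * p < 1) := by
  haveI : Nonempty (Fin G) := Fin.pos_iff_nonempty.mp hG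
  constructor
  · intro W Wbar
    apply ciSup_le
    intro i
    rw [abs_sub_le_iff]
    constructor
    · exact sl_diff_le G hG μ h hμ hh P hP0 lam hlam0 hlam1 hlamc p hp hPp W Wbar i
    · have := sl_diff_le G hG μ h hμ hh P hP0 lam hlam0 hlam1 hlamc p hp hPp Wbar W i
      have hMeq : (⨆ j, |Wbar j - W j|) = ⨆ j, |W j - Wbar j| := by
        congr 1; ext j; rw [abs_sub_comm]
      rwa [hMeq] at this
  · intro hp1
    have hE1 : Real.exp (-(μ * h)) < 1 := by
      calc Real.exp (-(μ * h)) < Real.exp 0 := Real.exp_lt_exp.mpr (by nlinarith)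
        _ = 1 := Real.exp_zero
    nlinarith
end

section
/- Let k_D, k_S ≥ 0 with k_D + k_S = 1, and let I be a real number with 0 < I ≤ 1. Set I₊ := I + k_S, I₋ := I − k_S, Q := k_D² + 8k_S² + 8·I·k_S, and f := √((k_D² − 2·I₊·I₋ + k_D·√Q)/(2·I₊²)). Then for every real p ≥ 0, the equation I·(1 + p²) − k_S·(1 − p²) − k_D·√(1 + p²) = 0 holds if and only if p = f. In particular the equation has exactly one nonnegative solution. -/
set_option maxHeartbeats 1000000 in
/-- Eikonal form of the Phong Shape-from-Shading equation with vertical light source and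
vertical observer: with `k_D + k_S = 1` and `0 < I ≤ 1`, for nonnegative `p` the equation
`I(1 + p²) − k_S(1 − p²) − k_D√(1 + p²) = 0` holds iff `p = f`, where
`f = √((k_D² − 2I₊I₋ + k_D√Q)/(2I₊²))`; in particular the equation has exactly one
nonnegative solution. -/
theorem phong_eikonal (kD kS : ℝ) (hkD : 0 ≤ kD) (hkS : 0 ≤ kS) (hsum : kD + kS = 1)
    (I : ℝ) (hI0 : 0 < I) (hI1 : I ≤ 1)
    (Ip Im Q f : ℝ) (hIp : Ip = I + kS) (hIm : Im = I - kS)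
    (hQ : Q = kD ^ 2 + 8 * kS ^ 2 + 8 * I * kS)
    (hf : f = Real.sqrt ((kD ^ 2 - 2 * Ip * Im + kD * Real.sqrt Q) / (2 * Ip ^ 2))) :
    (∀ p : ℝ, 0 ≤ p →
      (I * (1 + p ^ 2) - kS * (1 - p ^ 2) - kD * Real.sqrt (1 + p ^ 2) = 0 ↔ p = f)) ∧
    (∃! p : ℝ, 0 ≤ p ∧
      I * (1 + p ^ 2) - kS * (1 - p ^ 2) - kD * Real.sqrt (1 + p ^ 2) = 0) := by
  subst hIp hIm hQ
  set Q : ℝ := kD ^ 2 + 8 * kS ^ 2 + 8 * I * kS with hQ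
  have hIpPos : (0:ℝ) < I + kS := by linarith
  have hQnn : (0:ℝ) ≤ Q := by
    have : 0 ≤ 8 * I * kS := by positivity
    nlinarith [sq_nonneg kD, sq_nonneg kS]
  set sq := Real.sqrt Q with hsqdef
  have hsqnn : 0 ≤ sq := Real.sqrt_nonneg Q
  have hsq2 : sq ^ 2 = Q := Real.sq_sqrt hQnn
  have hkDsq : kD ≤ sq := by
    nlinarith [mul_nonneg hkS hkS, mul_nonneg hI0.le hkS, sq_nonneg (sq - kD)]
  have hr1 : 2 * (I + kS) ≤ kD + sq := by
    rcases le_or_gt (2 * (I + kS) - kD) 0 with h | h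
    · linarith
    · nlinarith [mul_nonneg (by linarith : (0:ℝ) ≤ 1 - I) (by linarith : (0:ℝ) ≤ I + kS),
        sq_nonneg (sq - (2 * (I + kS) - kD))]
  set r := (kD + sq) / (2 * (I + kS)) with hrdef
  have hr_ge1 : 1 ≤ r := by
    rw [hrdef, le_div_iff₀ (by linarith)]; linarith
  have hrPos : 0 < r := by linarith
  have h2Ipr : 2 * (I + kS) * r = kD + sq := by
    rw [hrdef]; field_simp
  have hA : (kD ^ 2 - 2 * (I + kS) * (I - kS) + kD * sq) / (2 * (I + kS) ^ 2)
      = r ^ 2 - 1 := by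
    rw [div_eq_iff (by positivity)]
    linear_combination (-(1/2) * (2 * (I + kS) * r + kD + sq)) * h2Ipr + (-(1/2)) * hsq2
  have hAnn : 0 ≤ r ^ 2 - 1 := by nlinarith [hr_ge1, hrPos]
  have hf2 : f ^ 2 = r ^ 2 - 1 := by
    rw [hf, Real.sq_sqrt (by rw [hA]; exact hAnn)]
    exact hA
  have hfnn : 0 ≤ f := by rw [hf]; exact Real.sqrt_nonneg _
  have key : ∀ p : ℝ, 0 ≤ p →
      (I * (1 + p ^ 2) - kS * (1 - p ^ 2) - kD * Real.sqrt (1 + p ^ 2) = 0 ↔ p = f) := by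
    intro p hp
    set s := Real.sqrt (1 + p ^ 2) with hsdef
    have hs2 : s ^ 2 = 1 + p ^ 2 := Real.sq_sqrt (by positivity)
    have hsnn : 0 ≤ s := Real.sqrt_nonneg _
    have hs1 : 1 ≤ s := by nlinarith
    have heqm : 4 * (I + kS) * (I * (1 + p ^ 2) - kS * (1 - p ^ 2) - kD * s)
        = (2 * (I + kS) * s - (kD + sq)) * (2 * (I + kS) * s + (sq - kD)) := by
      linear_combination (-(4 * (I + kS) ^ 2)) * hs2 + hsq2
    have hpos2 : 0 < 2 * (I + kS) * s + (sq - kD) := by nlinarith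
    have hiff : I * (1 + p ^ 2) - kS * (1 - p ^ 2) - kD * s = 0 ↔ s = r := by
      constructor
      · intro h
        have h4 : (2 * (I + kS) * s - (kD + sq)) * (2 * (I + kS) * s + (sq - kD)) = 0 := by
          rw [← heqm, h]; ring
        rcases mul_eq_zero.mp h4 with h' | h'
        · rw [hrdef, eq_div_iff (by linarith)]; linarith
        · exact absurd h' hpos2.ne'
      · intro h
        have h5 : 2 * (I + kS) * s - (kD + sq) = 0 := by
          rw [h, hrdef]; field_simp; ring
        have := heqm
        rw [h5] at this
        nlinarith [this]
    rw [hiff]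
    constructor
    · intro hsr
      have hp2 : p ^ 2 = f ^ 2 := by rw [hf2]; nlinarith
      calc p = Real.sqrt (p ^ 2) := (Real.sqrt_sq hp).symm
        _ = Real.sqrt (f ^ 2) := by rw [hp2]
        _ = f := Real.sqrt_sq hfnn
    · rintro rfl
      have h1 : s ^ 2 = r ^ 2 := by rw [hs2]; nlinarith [hf2]
      calc s = Real.sqrt (s ^ 2) := (Real.sqrt_sq hsnn).symm
        _ = Real.sqrt (r ^ 2) := by rw [h1]
        _ = r := Real.sqrt_sq hrPos.le
  refine ⟨key, f, ⟨hfnn, (key f hfnn).mpr rfl⟩, ?_⟩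
  rintro p ⟨hp, hpe⟩
  exact (key p hp).mp hpe
end

section
/- Let ω = (ω₁, ω₂, ω₃) ∈ ℝ³ be a unit vector with ω₃ > 0, let μ > 0, and let I ≥ 0 be a real number. Let u : ℝ² → ℝ be differentiable at a point x, and set v := (1 − exp(−μu))/μ. Then the Lambertian Hamilton–Jacobi equation I·√(1 + ‖∇u(x)‖²) + (ω₁, ω₂)·∇u(x) − ω₃ = 0 holds if and only if μ·v(x) = min over a = (a₁,a₂,a₃) in the unit sphere of ℝ³ of { (1/ω₃)·((I·a₁ − ω₁)·∂₁v(x) + (I·a₂ − ω₂)·∂₂v(x)) − (I·a₃/ω₃)·(1 − μ·v(x)) + 1 }. -/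
open scoped RealInnerProductSpace

lemma sInf_inner_sphere (c : EuclideanSpace ℝ (Fin 3)) (d : ℝ) :
    sInf ((fun a : EuclideanSpace ℝ (Fin 3) => ⟪c, a⟫ + d) ''
      Metric.sphere (0 : EuclideanSpace ℝ (Fin 3)) 1) = -‖c‖ + d := by
  apply IsLeast.csInf_eq
  constructor
  · rcases eq_or_ne c 0 with hc | hc
    · refine ⟨EuclideanSpace.single 0 1, ?_, ?_⟩
      · simp [mem_sphere_zero_iff_norm, EuclideanSpace.norm_single]
      · simp [hc]
    · refine ⟨(-‖c‖⁻¹) • c, ?_, ?_⟩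
      · simp only [mem_sphere_zero_iff_norm, norm_smul, norm_neg, norm_inv, norm_norm]
        field_simp [norm_ne_zero_iff.mpr hc]
      · simp only [real_inner_smul_right, real_inner_self_eq_norm_sq]
        have hc' : ‖c‖ ≠ 0 := norm_ne_zero_iff.mpr hc
        field_simp
  · rintro y ⟨a, ha, rfl⟩
    rw [mem_sphere_zero_iff_norm] at ha
    have h := abs_real_inner_le_norm c a
    rw [ha, mul_one] at h
    have h2 := neg_abs_le (⟪c, a⟫)
    simp only []
    linarith

/-- Equivalence between the orthographic Lambertian Shape-from-Shading equation
`I√(1 + |∇u|²) + ω̃·∇u − ω₃ = 0` and its fixed-point form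
`μv = min_{a ∈ ∂B₃} { b^L(x,a)·∇v + f^L(x,a,v) }`, where `v = (1 − exp(−μu))/μ` is the
Kružkov transform of `u`, `b^L(x,a) = (1/ω₃)(I a₁ − ω₁, I a₂ − ω₂)` and
`f^L(x,a,v) = −(I a₃/ω₃)(1 − μv) + 1`; the minimum over the compact unit sphere is the
infimum, where it is attained. -/
theorem lambertian_fixed_point_form (ω : EuclideanSpace ℝ (Fin 3)) (hω : ‖ω‖ = 1)
    (hω3 : 0 < ω 2) (μ : ℝ) (hμ : 0 < μ) (I : ℝ) (hI : 0 ≤ I)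
    (u : EuclideanSpace ℝ (Fin 2) → ℝ) (x : EuclideanSpace ℝ (Fin 2))
    (hu : DifferentiableAt ℝ u x)
    (v : EuclideanSpace ℝ (Fin 2) → ℝ)
    (hv : v = fun y => (1 - Real.exp (-(μ * u y))) / μ) :
    (I * Real.sqrt (1 + ‖gradient u x‖ ^ 2)
        + (ω 0 * gradient u x 0 + ω 1 * gradient u x 1) - ω 2 = 0)
    ↔ μ * v x = sInf ((fun a : EuclideanSpace ℝ (Fin 3) =>
        (1 / ω 2) * ((I * a 0 - ω 0) * gradient v x 0 + (I * a 1 - ω 1) * gradient v x 1)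
          - (I * a 2 / ω 2) * (1 - μ * v x) + 1) ''
        Metric.sphere (0 : EuclideanSpace ℝ (Fin 3)) 1) := by
  set p0 : ℝ := gradient u x 0 with hp0
  set p1 : ℝ := gradient u x 1 with hp1
  set E : ℝ := Real.exp (-(μ * u x)) with hEdef
  have hE : 0 < E := Real.exp_pos _
  have hvx : μ * v x = 1 - E := by
    rw [hv]; field_simp; rfl
  have hgv : gradient v x = E • gradient u x := by
    have h1 : HasDerivAt (fun t : ℝ => -(μ * t)) (-μ) (u x) := by
      have h := ((hasDerivAt_id' (u x)).const_mul μ).neg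
      rw [mul_one] at h
      exact h
    have h2 : HasDerivAt (fun t : ℝ => Real.exp (-(μ * t))) (E * -μ) (u x) :=
      (Real.hasDerivAt_exp _).comp _ h1
    have h3 : HasDerivAt (fun t : ℝ => (1 - Real.exp (-(μ * t))) / μ)
        ((0 - E * -μ) / μ) (u x) := ((hasDerivAt_const _ (1 : ℝ)).sub h2).div_const μ
    have h4 : HasDerivAt (fun t : ℝ => (1 - Real.exp (-(μ * t))) / μ) E (u x) := by
      convert h3 using 1
      field_simp
      ring
    have hF : HasFDerivAt v
        (E • (InnerProductSpace.toDual ℝ (EuclideanSpace ℝ (Fin 2)) (gradient u x)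
          : EuclideanSpace ℝ (Fin 2) →L[ℝ] ℝ)) x := by
      rw [hv]
      exact h4.comp_hasFDerivAt x hu.hasGradientAt.hasFDerivAt
    have : HasGradientAt v (E • gradient u x) x := by
      rw [hasGradientAt_iff_hasFDerivAt]
      rwa [map_smul]
    exact this.gradient
  have e0 : gradient v x 0 = E * p0 := by rw [hgv]; rfl
  have e1 : gradient v x 1 = E * p1 := by rw [hgv]; rfl
  have hE1 : 1 - μ * v x = E := by linarith
  set k : ℝ := I * E / ω 2 with hkdef
  have hk : 0 ≤ k := by positivity
  set c : EuclideanSpace ℝ (Fin 3) :=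
    (WithLp.equiv 2 (Fin 3 → ℝ)).symm ![k * p0, k * p1, -k] with hcdef
  set d : ℝ := -(E / ω 2) * (ω 0 * p0 + ω 1 * p1) + 1 with hddef
  have himg : (fun a : EuclideanSpace ℝ (Fin 3) =>
        (1 / ω 2) * ((I * a 0 - ω 0) * gradient v x 0 + (I * a 1 - ω 1) * gradient v x 1)
          - (I * a 2 / ω 2) * (1 - μ * v x) + 1)
      = (fun a : EuclideanSpace ℝ (Fin 3) => ⟪c, a⟫ + d) := by
    funext a
    simp only [e0, e1, hE1, PiLp.inner_apply, RCLike.inner_apply, conj_trivial,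
      Fin.sum_univ_three, hcdef, WithLp.equiv_symm_apply, PiLp.toLp_apply, WithLp.ofLp_toLp, Matrix.cons_val_zero,
      Matrix.cons_val_one, Matrix.head_cons, Matrix.cons_val_two, Matrix.tail_cons, hddef, hkdef]
    field_simp
    ring
  have hpnorm : ‖gradient u x‖ ^ 2 = p0 ^ 2 + p1 ^ 2 := by
    rw [EuclideanSpace.norm_eq, Real.sq_sqrt (by positivity)]
    simp [Fin.sum_univ_two, sq_abs, hp0, hp1]
  have hcnorm : ‖c‖ = k * Real.sqrt (1 + ‖gradient u x‖ ^ 2) := by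
    rw [EuclideanSpace.norm_eq]
    have : ∑ i, ‖c i‖ ^ 2 = k ^ 2 * (1 + (p0 ^ 2 + p1 ^ 2)) := by
      simp [Fin.sum_univ_three, hcdef, WithLp.equiv_symm_apply, PiLp.toLp_apply, WithLp.ofLp_toLp, sq_abs]
      ring
    rw [this, Real.sqrt_mul (sq_nonneg k), Real.sqrt_sq hk, hpnorm]
  rw [himg, sInf_inner_sphere, hcnorm, hvx]
  set S : ℝ := Real.sqrt (1 + ‖gradient u x‖ ^ 2) with hSdef
  rw [hkdef, hddef]
  have hrhs : -(I * E / ω 2 * S) + (-(E / ω 2) * (ω 0 * p0 + ω 1 * p1) + 1)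
      = 1 - (E / ω 2) * (I * S + (ω 0 * p0 + ω 1 * p1)) := by
    field_simp
    ring
  rw [hrhs]
  constructor
  · intro h
    have h1 : I * S + (ω 0 * p0 + ω 1 * p1) = ω 2 := by linarith
    rw [h1, div_mul_cancel₀ E (ne_of_gt hω3)]
  · intro h
    have h2 : E = (E / ω 2) * (I * S + (ω 0 * p0 + ω 1 * p1)) := by linarith
    rw [div_mul_eq_mul_div, eq_div_iff (ne_of_gt hω3)] at h2
    have h3 := mul_left_cancel₀ (ne_of_gt hE) h2.symm
    linarith
end

section
/- Let ω = (ω₁, ω₂, ω₃) ∈ ℝ³ be a unit vector with ω₃ > 0, let A > 0, B ∈ ℝ, μ > 0, and I ∈ ℝ. Let u : ℝ² → ℝ be differentiable at a point x; write p := ∇u(x), s := √(1 + ‖p‖²), n := (−p, 1)/s, and c := I − B + B·(⟨n, ω⟩)², and assume c ≥ 0. Set v := (1 − exp(−μu))/μ. Then the Oren–Nayar Hamilton–Jacobi equation (I − B)·s + A·((ω₁, ω₂)·p − ω₃) + B·(−(ω₁, ω₂)·p + ω₃)²/s = 0 holds if and only if μ·v(x) = min over a = (a₁,a₂,a₃)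 in the unit sphere of ℝ³ of { (1/(A·ω₃))·((c·a₁ − A·ω₁)·∂₁v(x) + (c·a₂ − A·ω₂)·∂₂v(x)) − (c·a₃/(A·ω₃))·(1 − μ·v(x)) + 1 }. -/
open InnerProductSpace

lemma kruzkov_gradient (μ : ℝ) (hμ : μ ≠ 0) (u : EuclideanSpace ℝ (Fin 2) → ℝ)
    (x : EuclideanSpace ℝ (Fin 2)) (hu : DifferentiableAt ℝ u x) :
    gradient (fun y => (1 - Real.exp (-(μ * u y))) / μ) x
      = Real.exp (-(μ * u x)) • gradient u x := by
  have h2 : HasFDerivAt u (toDual ℝ _ (gradient u x)) x :=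
    hasGradientAt_iff_hasFDerivAt.mp hu.hasGradientAt
  have hg : HasDerivAt (fun t : ℝ => (1 - Real.exp (-(μ * t))) / μ)
      (Real.exp (-(μ * u x))) (u x) := by
    have : HasDerivAt (fun t : ℝ => (1 - Real.exp (-(μ * t))) / μ)
        ((-(Real.exp (-(μ * u x)) * -μ)) / μ) (u x) := by
      have he : HasDerivAt (fun t : ℝ => Real.exp (-(μ * t)))
          (Real.exp (-(μ * u x)) * -μ) (u x) := by
        have := ((hasDerivAt_id (u x)).const_mul μ).neg.exp
        simpa [mul_comm] using this
      simpa using (he.const_sub 1).div_const μ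
    convert this using 1
    field_simp
  have h3 : HasFDerivAt (fun y => (1 - Real.exp (-(μ * u y))) / μ)
      (Real.exp (-(μ * u x)) • toDual ℝ _ (gradient u x)) x :=
    hg.comp_hasFDerivAt x h2
  have h4 : HasGradientAt (fun y => (1 - Real.exp (-(μ * u y))) / μ)
      (Real.exp (-(μ * u x)) • gradient u x) x := by
    rw [hasGradientAt_iff_hasFDerivAt]
    simpa [map_smul] using h3
  exact h4.gradient

set_option maxHeartbeats 1600000 in
/-- Equivalence between the Oren–Nayar Shape-from-Shading Hamilton–Jacobi equation (case
`θ_i = θ_r`, `φ_r = φ_i`) `(I − B)s + A(ω̃·p − ω₃) + B(−ω̃·p + ω₃)²/s = 0`, where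
`p = ∇u(x)` and `s = √(1 + ‖p‖²)`, and its fixed-point form
`μv = min_{a ∈ ∂B₃} { b^{ON}(x,a)·∇v + f^{ON}(x,a,v) }`, with `c = I − B + B⟨n, ω⟩²`
(`n = (−p, 1)/s` the unit normal, so `⟨n, ω⟩ = (−ω̃·p + ω₃)/s`), `c ≥ 0`,
`b^{ON}(x,a) = (c a₁ − Aω₁, c a₂ − Aω₂)/(Aω₃)`, `f^{ON}(x,a,v) = −(c a₃/(Aω₃))(1−μv) + 1`,
and `v = (1 − exp(−μu))/μ` the Kružkov transform of `u`. -/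
theorem oren_nayar_fixed_point_form (ω : EuclideanSpace ℝ (Fin 3)) (hω : ‖ω‖ = 1)
    (hω3 : 0 < ω 2) (A B μ I : ℝ) (hA : 0 < A) (hμ : 0 < μ)
    (u : EuclideanSpace ℝ (Fin 2) → ℝ) (x : EuclideanSpace ℝ (Fin 2))
    (hu : DifferentiableAt ℝ u x)
    (p : EuclideanSpace ℝ (Fin 2)) (hp : p = gradient u x)
    (s : ℝ) (hs : s = Real.sqrt (1 + ‖p‖ ^ 2))
    (c : ℝ) (hc : c = I - B + B * ((-(ω 0 * p 0 + ω 1 * p 1) + ω 2) / s) ^ 2)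
    (hc0 : 0 ≤ c)
    (v : EuclideanSpace ℝ (Fin 2) → ℝ)
    (hv : v = fun y => (1 - Real.exp (-(μ * u y))) / μ) :
    ((I - B) * s + A * ((ω 0 * p 0 + ω 1 * p 1) - ω 2)
        + B * (-(ω 0 * p 0 + ω 1 * p 1) + ω 2) ^ 2 / s = 0)
    ↔ μ * v x = sInf ((fun a : EuclideanSpace ℝ (Fin 3) =>
        (1 / (A * ω 2)) * ((c * a 0 - A * ω 0) * gradient v x 0
          + (c * a 1 - A * ω 1) * gradient v x 1)
          - (c * a 2 / (A * ω 2)) * (1 - μ * v x) + 1) ''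
        Metric.sphere (0 : EuclideanSpace ℝ (Fin 3)) 1) := by
  set e := Real.exp (-(μ * u x)) with he
  have he0 : 0 < e := Real.exp_pos _
  have hAω : (0:ℝ) < A * ω 2 := mul_pos hA hω3
  -- basic facts about p, s
  have hps : ‖p‖ ^ 2 = p 0 ^ 2 + p 1 ^ 2 := by
    rw [EuclideanSpace.norm_eq, Real.sq_sqrt (by positivity)]
    simp [Fin.sum_univ_two, sq_abs]
  have hs0 : 0 < s := by rw [hs]; positivity
  have hs2 : s ^ 2 = 1 + p 0 ^ 2 + p 1 ^ 2 := by
    rw [hs, Real.sq_sqrt (by positivity), hps]; ring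
  -- Kruzkov transform facts
  have hμv : μ * v x = 1 - e := by
    rw [hv]; field_simp; rw [he]
  have hgrad : gradient v x = e • gradient u x := by
    rw [hv]; exact kruzkov_gradient μ hμ.ne' u x hu
  have hq0 : gradient v x 0 = e * p 0 := by rw [hgrad, hp]; rfl
  have hq1 : gradient v x 1 = e * p 1 := by rw [hgrad, hp]; rfl
  -- the minimizer
  set astar : EuclideanSpace ℝ (Fin 3) :=
    (WithLp.equiv 2 (Fin 3 → ℝ)).symm ![-p 0 / s, -p 1 / s, 1 / s] with hastar
  have ha0 : astar 0 = -p 0 / s := rfl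
  have ha1 : astar 1 = -p 1 / s := rfl
  have ha2 : astar 2 = 1 / s := rfl
  have hastar_mem : astar ∈ Metric.sphere (0 : EuclideanSpace ℝ (Fin 3)) 1 := by
    rw [mem_sphere_zero_iff_norm, EuclideanSpace.norm_eq]
    have : (∑ i, ‖astar i‖ ^ 2) = 1 := by
      simp only [Fin.sum_univ_three, ha0, ha1, ha2, Real.norm_eq_abs, sq_abs]
      field_simp
      linarith [hs2]
    rw [this, Real.sqrt_one]
  -- the value of the min
  set M : ℝ := (A * ω 2 - c * (e * s) - A * (ω 0 * p 0 + ω 1 * p 1) * e) / (A * ω 2) with hM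
  set f : EuclideanSpace ℝ (Fin 3) → ℝ := fun a =>
        (1 / (A * ω 2)) * ((c * a 0 - A * ω 0) * gradient v x 0
          + (c * a 1 - A * ω 1) * gradient v x 1)
          - (c * a 2 / (A * ω 2)) * (1 - μ * v x) + 1 with hf
  have hone : 1 - μ * v x = e := by rw [hμv]; ring
  have hfa : ∀ a : EuclideanSpace ℝ (Fin 3),
      f a = (c / (A * ω 2)) * (a 0 * (e * p 0) + a 1 * (e * p 1) + a 2 * (-e))
        + (1 - (ω 0 * p 0 + ω 1 * p 1) * e / ω 2) := by
    intro a
    rw [hf]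
    simp only [hq0, hq1, hone]
    field_simp
    ring
  have hM2 : M = (c / (A * ω 2)) * (-(e * s))
      + (1 - (ω 0 * p 0 + ω 1 * p 1) * e / ω 2) := by
    rw [hM]; field_simp; ring
  have hSastar : astar 0 * (e * p 0) + astar 1 * (e * p 1) + astar 2 * (-e) = -(e * s) := by
    rw [ha0, ha1, ha2]
    field_simp
    linear_combination hs2
  have hfastar : f astar = M := by
    rw [hfa, hSastar, hM2]
  -- Cauchy-Schwarz lower bound
  have hlow : ∀ a ∈ Metric.sphere (0 : EuclideanSpace ℝ (Fin 3)) 1,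
      -(e * s) ≤ a 0 * (e * p 0) + a 1 * (e * p 1) + a 2 * (-e) := by
    intro a ha
    rw [mem_sphere_zero_iff_norm] at ha
    set w : EuclideanSpace ℝ (Fin 3) :=
      (WithLp.equiv 2 (Fin 3 → ℝ)).symm ![e * p 0, e * p 1, -e] with hw
    have hinner : inner ℝ a w = a 0 * (e * p 0) + a 1 * (e * p 1) + a 2 * (-e) := by
      rw [PiLp.inner_apply]
      simp only [Fin.sum_univ_three, hw, RCLike.inner_apply, conj_trivial,
        WithLp.equiv_symm_apply, WithLp.ofLp_toLp, Matrix.cons_val_zero, Matrix.cons_val_one,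
        Matrix.head_cons, Matrix.cons_val_two, Matrix.tail_cons]
      ring
    have hwnorm : ‖w‖ = e * s := by
      rw [EuclideanSpace.norm_eq]
      have h1 : (∑ i, ‖w i‖ ^ 2) = (e * s) ^ 2 := by
        simp only [Fin.sum_univ_three, hw, Real.norm_eq_abs, sq_abs,
          WithLp.equiv_symm_apply, WithLp.ofLp_toLp, Matrix.cons_val_zero, Matrix.cons_val_one,
          Matrix.head_cons, Matrix.cons_val_two, Matrix.tail_cons]
        linear_combination (-e ^ 2) * hs2
      rw [h1, Real.sqrt_sq (by positivity)]
    have habs := abs_real_inner_le_norm a w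
    rw [ha, hwnorm, one_mul, hinner] at habs
    exact neg_le_of_abs_le habs
  -- the infimum
  have hsInf : sInf (f '' Metric.sphere (0 : EuclideanSpace ℝ (Fin 3)) 1) = M := by
    apply IsLeast.csInf_eq
    constructor
    · exact ⟨astar, hastar_mem, hfastar⟩
    · rintro y ⟨a, ha, rfl⟩
      rw [hfa a, hM2]
      have h1 := hlow a ha
      have h2 : (c / (A * ω 2)) * (-(e * s))
          ≤ (c / (A * ω 2)) * (a 0 * (e * p 0) + a 1 * (e * p 1) + a 2 * (-e)) :=
        mul_le_mul_of_nonneg_left h1 (by positivity)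
      linarith
  rw [hsInf, hμv]
  -- now both sides reduce to c*s + A*(ω̃·p - ω₂) = 0
  have hcs : c * s = (I - B) * s + B * (-(ω 0 * p 0 + ω 1 * p 1) + ω 2) ^ 2 / s := by
    rw [hc]; field_simp
  constructor
  · intro h
    rw [hM, eq_div_iff hAω.ne']
    have hkey : c * s + A * ((ω 0 * p 0 + ω 1 * p 1) - ω 2) = 0 := by
      rw [hcs]; linarith
    nlinarith [hkey]
  · intro h
    rw [hM, eq_div_iff hAω.ne'] at h
    have hkey : e * (c * s + A * ((ω 0 * p 0 + ω 1 * p 1) - ω 2)) = 0 := by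
      nlinarith [h]
    have h2 : c * s + A * ((ω 0 * p 0 + ω 1 * p 1) - ω 2) = 0 :=
      by rcases mul_eq_zero.mp hkey with h' | h'
         · exact absurd h' he0.ne'
         · exact h'
    rw [hcs] at h2
    linarith
end
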